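/- Let f ∈ ℍ[X] be a quadratic polynomial (deg f = 2). Then every root of the formal derivative f′ lies in the convex hull (taken in the real normed space ℍ ≅ ℝ⁴) of the set {r ∈ ℍ | eval r C_f = 0} of roots of the companion polynomial of f. -/

import Mathlib

open Polynomial

/-- The conjugate polynomial `conj(f) = ∑ₖ (star aₖ) Xᵏ`. -/
noncomputable def polyConj (f : Polynomial (Quaternion ℝ)) : Polynomial (Quaternion ℝ) :=
  f.sum fun k a => C (star a) * X ^ k

/-- The companion polynomial `C_f = conj(f) · f`. -/
noncomputable def companion (f : Polynomial (Quaternion ℝ)) : Polynomial (Quaternion ℝ) :=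
  polyConj f * f

open Quaternion

lemma quatChar (x : Quaternion ℝ) : x*x - ((2*x.re : ℝ) : Quaternion ℝ)*x + ((normSq x : ℝ) : Quaternion ℝ) = 0 := by
  ext <;>
    simp [Quaternion.re_mul, Quaternion.imI_mul, Quaternion.imJ_mul, Quaternion.imK_mul,
      Quaternion.normSq_def', ← Quaternion.coe_pow, Quaternion.re_coe, Quaternion.imI_coe,
      Quaternion.imJ_coe, Quaternion.imK_coe] <;> ring

lemma quatI1 (u v : Quaternion ℝ) :
    star (u*v) * (u*v - v*u) + (-(star u + star v)) * ((u*v - v*u) * u)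
      + (u*v - v*u) * (u*u) = 0 := by
  ext <;>
    simp only [Quaternion.re_mul, Quaternion.imI_mul, Quaternion.imJ_mul, Quaternion.imK_mul,
      Quaternion.re_add, Quaternion.imI_add, Quaternion.imJ_add, Quaternion.imK_add,
      Quaternion.re_sub, Quaternion.imI_sub, Quaternion.imJ_sub, Quaternion.imK_sub,
      Quaternion.re_neg, Quaternion.imI_neg, Quaternion.imJ_neg, Quaternion.imK_neg,
      Quaternion.re_star, Quaternion.imI_star, Quaternion.imJ_star, Quaternion.imK_star,
      Quaternion.re_zero, Quaternion.imI_zero, Quaternion.imJ_zero, Quaternion.imK_zero] <;>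
    ring

lemma quad_dvd_of_complex_root (q : Polynomial ℝ) (z : ℂ) (hz : aeval z q = 0) (him : z.im ≠ 0) :
    (X^2 + C (-(2*z.re))*X + C (z.re^2+z.im^2)) ∣ q := by
  set p : Polynomial ℝ := X^2 + C (-(2*z.re))*X + C (z.re^2+z.im^2) with hp
  have hpm : p.Monic := by unfold p; monicity!
  rw [← Polynomial.map_dvd_map (algebraMap ℝ ℂ) (algebraMap ℝ ℂ).injective hpm]
  have hmap : p.map (algebraMap ℝ ℂ) = (X - C z) * (X - C (starRingEnd ℂ z)) := by
    simp only [hp, Polynomial.map_add, Polynomial.map_mul, Polynomial.map_pow, map_X, map_C]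
    have h1 : (algebraMap ℝ ℂ) (-(2*z.re)) = -(z + starRingEnd ℂ z) := by
      rw [Complex.add_conj, Complex.coe_algebraMap]; push_cast; ring
    have h2 : (algebraMap ℝ ℂ) (z.re^2+z.im^2) = z * starRingEnd ℂ z := by
      rw [Complex.mul_conj, Complex.coe_algebraMap]; simp [Complex.normSq_apply]; push_cast; ring
    rw [h1, h2]
    simp only [map_neg, map_add, map_mul, C_mul]
    ring
  rw [hmap]
  have hz' : IsRoot (q.map (algebraMap ℝ ℂ)) z := by
    rwa [IsRoot, eval_map, ← aeval_def]
  have hzc : IsRoot (q.map (algebraMap ℝ ℂ)) (starRingEnd ℂ z) := by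
    rw [IsRoot, eval_map]
    have h3 := Polynomial.hom_eval₂ q (algebraMap ℝ ℂ) (starRingEnd ℂ) z
    have hcomp : (starRingEnd ℂ).comp (algebraMap ℝ ℂ) = algebraMap ℝ ℂ := by
      ext x; simp
    rw [hcomp] at h3
    rw [← h3, ← aeval_def, hz, map_zero]
  obtain ⟨q₂, hq₂⟩ := (dvd_iff_isRoot.mpr hz')
  have hzc2 : eval (starRingEnd ℂ z) q₂ = 0 := by
    have h4 : eval (starRingEnd ℂ z) (q.map (algebraMap ℝ ℂ)) = 0 := hzc
    rw [hq₂, eval_mul, eval_sub, eval_X, eval_C] at h4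
    have hne : starRingEnd ℂ z - z ≠ 0 := by
      intro h
      exact him (Complex.conj_eq_iff_im.mp (sub_eq_zero.mp h))
    exact (mul_eq_zero.mp h4).resolve_left hne
  obtain ⟨q₃, hq₃⟩ := (dvd_iff_isRoot.mpr (show IsRoot q₂ _ from hzc2))
  exact ⟨q₃, by rw [hq₂, hq₃]; ring⟩

lemma exists_complex_root (q : Polynomial ℝ) (hq : q ≠ 0) (h1 : 1 ≤ q.natDegree) :
    ∃ z : ℂ, aeval z q = 0 := by
  have hdeg : (q.map (algebraMap ℝ ℂ)).degree ≠ 0 := by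
    rw [Polynomial.degree_map, Polynomial.degree_eq_natDegree hq]
    intro h
    have : q.natDegree = 0 := by exact_mod_cast h
    omega
  obtain ⟨z, hz⟩ := IsAlgClosed.exists_root _ hdeg
  exact ⟨z, by rwa [IsRoot, eval_map, ← aeval_def] at hz⟩

lemma real_root_of_im_zero (q : Polynomial ℝ) (z : ℂ) (hz : aeval z q = 0) (him : z.im = 0) :
    eval z.re q = 0 := by
  have hzz : ((z.re : ℝ) : ℂ) = z := Complex.ext rfl him.symm
  have h2 : eval₂ (algebraMap ℝ ℂ) ((algebraMap ℝ ℂ) z.re) q = algebraMap ℝ ℂ (eval z.re q) :=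
    Polynomial.eval₂_at_apply _ _
  rw [show (algebraMap ℝ ℂ) z.re = ((z.re : ℝ) : ℂ) from rfl, hzz, ← aeval_def, hz] at h2
  have := h2.symm
  rwa [Complex.coe_algebraMap, Complex.ofReal_eq_zero] at this

lemma exists_quadratic_factor (q : Polynomial ℝ) (hm : q.Monic) (hd : 2 ≤ q.natDegree) :
    ∃ s t : ℝ, (X^2 + C s * X + C t) ∣ q := by
  have hq0 : q ≠ 0 := hm.ne_zero
  obtain ⟨z, hz⟩ := exists_complex_root q hq0 (by omega)
  by_cases him : z.im = 0
  · -- real root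
    have hroot := real_root_of_im_zero q z hz him
    obtain ⟨q₁, hq₁⟩ := dvd_iff_isRoot.mpr hroot
    have hq₁m : q₁.Monic := (monic_X_sub_C z.re).of_mul_monic_left (hq₁ ▸ hm)
    have hq₁deg : 1 ≤ q₁.natDegree := by
      have := (monic_X_sub_C z.re).natDegree_mul hq₁m
      rw [← hq₁, natDegree_X_sub_C] at this
      omega
    obtain ⟨w, hw⟩ := exists_complex_root q₁ hq₁m.ne_zero hq₁deg
    by_cases hwim : w.im = 0
    · have hroot2 := real_root_of_im_zero q₁ w hw hwim
      obtain ⟨q₄, hq₄⟩ := dvd_iff_isRoot.mpr hroot2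
      refine ⟨-(z.re + w.re), z.re * w.re, q₄, ?_⟩
      rw [hq₁, hq₄]
      simp only [C_neg, C_add, C_mul]
      ring
    · obtain ⟨g, hg⟩ := quad_dvd_of_complex_root q₁ w hw hwim
      exact ⟨-(2*w.re), w.re^2+w.im^2, (X - C z.re) * g, by rw [hq₁, hg]; ring⟩
  · obtain ⟨g, hg⟩ := quad_dvd_of_complex_root q z hz him
    exact ⟨-(2*z.re), z.re^2+z.im^2, g, hg⟩

lemma exists_root_quadratic (b c : Quaternion ℝ) : ∃ v : Quaternion ℝ, v*v + b*v + c = 0 := by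
  set Q : Polynomial ℝ := X^4 + C (2*b.re) * X^3 + C (normSq b + 2*c.re) * X^2
      + C (2*(star b * c).re) * X + C (normSq c) with hQ
  have hQm : Q.Monic := by unfold Q; monicity!
  have hQd : Q.natDegree = 4 := by unfold Q; compute_degree!
  obtain ⟨s, t, g, hfac⟩ := exists_quadratic_factor Q hQm (by omega)
  set p : Polynomial ℝ := X^2 + C s * X + C t with hp
  have hpm : p.Monic := by unfold p; monicity!
  have hpd : p.natDegree = 2 := by unfold p; compute_degree!
  have hgm : g.Monic := hpm.of_mul_monic_left (hfac ▸ hQm)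
  set d : Quaternion ℝ := b - ((s : ℝ) : Quaternion ℝ) with hd
  set e : Quaternion ℝ := c - ((t : ℝ) : Quaternion ℝ) with he
  have keyEval : ∀ x : ℝ, eval x p * eval x g =
      (eval x p)^2 + (eval x p)*(2*d.re*x + 2*e.re)
        + (normSq d * x^2 + 2*(star d * e).re*x + normSq e) := by
    intro x
    rw [← eval_mul, ← hfac]
    have hevp : eval x p = x^2 + s*x + t := by simp [hp]
    rw [hevp]
    simp only [hQ, eval_add, eval_mul, eval_pow, eval_C, eval_X, hd, he,
      Quaternion.normSq_def', Quaternion.re_mul, Quaternion.re_star, Quaternion.imI_star,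
      Quaternion.imJ_star, Quaternion.imK_star, Quaternion.re_sub, Quaternion.imI_sub,
      Quaternion.imJ_sub, Quaternion.imK_sub, Quaternion.re_coe, Quaternion.imI_coe,
      Quaternion.imJ_coe, Quaternion.imK_coe]
    ring
  set H : Polynomial ℝ := g - p - (C (2*d.re) * X + C (2*e.re)) with hH
  set R' : Polynomial ℝ := C (normSq d)*X^2 + C (2*(star d * e).re)*X + C (normSq e) with hR'
  have hPH : p * H = R' := by
    apply Polynomial.funext
    intro x
    rw [eval_mul]
    have h1 : eval x H = eval x g - eval x p - (2*d.re*x + 2*e.re) := by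
      simp [hH]
    have h2 : eval x R' = normSq d * x^2 + 2*(star d * e).re*x + normSq e := by
      simp [hR']
    rw [h1, h2]
    linear_combination keyEval x
  have hR'd : R'.natDegree ≤ 2 := by unfold R'; compute_degree
  have facts : 2*(star d * e).re = s * normSq d ∧ normSq e = t * normSq d := by
    rcases eq_or_ne H 0 with h0 | hne
    · rw [h0, mul_zero] at hPH
      have c2 : R'.coeff 2 = normSq d := by
        simp [hR', coeff_add, coeff_C_mul, coeff_X_pow, coeff_C, coeff_X]
      have c1 : R'.coeff 1 = 2*(star d * e).re := by
        simp [hR', coeff_add, coeff_C_mul, coeff_X_pow, coeff_C, coeff_X]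
      have c0 : R'.coeff 0 = normSq e := by
        simp [hR', coeff_add, coeff_C_mul, coeff_X_pow, coeff_C, coeff_X]
      rw [← hPH] at c2 c1 c0
      simp only [Polynomial.coeff_zero] at c2 c1 c0
      refine ⟨?_, ?_⟩
      · rw [← c1, ← c2, mul_zero]
      · rw [← c0, ← c2, mul_zero]
    · have hdegH : H.natDegree = 0 := by
        have h3 : (p * H).natDegree = p.natDegree + H.natDegree :=
          natDegree_mul hpm.ne_zero hne
        rw [hPH, hpd] at h3
        omega
      have hHC : H = C (H.coeff 0) := eq_C_of_natDegree_le_zero (le_of_eq hdegH)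
      set β := H.coeff 0 with hβ
      have hR2 : R' = p * C β := by rw [← hHC]; exact hPH.symm
      have c2 : R'.coeff 2 = normSq d := by
        simp [hR', coeff_add, coeff_C_mul, coeff_X_pow, coeff_C, coeff_X]
      have c1 : R'.coeff 1 = 2*(star d * e).re := by
        simp [hR', coeff_add, coeff_C_mul, coeff_X_pow, coeff_C, coeff_X]
      have c0 : R'.coeff 0 = normSq e := by
        simp [hR', coeff_add, coeff_C_mul, coeff_X_pow, coeff_C, coeff_X]
      have p2 : p.coeff 2 = 1 := by
        simp [hp, coeff_add, coeff_C_mul, coeff_X_pow, coeff_C, coeff_X]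
      have p1 : p.coeff 1 = s := by
        simp [hp, coeff_add, coeff_C_mul, coeff_X_pow, coeff_C, coeff_X]
      have p0 : p.coeff 0 = t := by
        simp [hp, coeff_add, coeff_C_mul, coeff_X_pow, coeff_C, coeff_X]
      have e2 : normSq d = β := by rw [← c2, hR2, coeff_mul_C, p2, one_mul]
      have e1 : 2*(star d * e).re = s * β := by rw [← c1, hR2, coeff_mul_C, p1]
      have e0 : normSq e = t * β := by rw [← c0, hR2, coeff_mul_C, p0]
      rw [← e2] at e1 e0
      exact ⟨e1, e0⟩
  obtain ⟨factA, factB⟩ := facts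
  by_cases hd0 : d = 0
  · -- b and c are real
    have hb : b = ((s : ℝ) : Quaternion ℝ) := by
      have := hd0; rw [hd, sub_eq_zero] at this; exact this
    have he0 : e = 0 := by
      rw [← Quaternion.normSq_eq_zero]
      rw [factB, hd0]
      simp
    have hc : c = ((t : ℝ) : Quaternion ℝ) := by
      have := he0; rw [he, sub_eq_zero] at this; exact this
    by_cases hdisc : s^2 - 4*t ≥ 0
    · refine ⟨(((-s + Real.sqrt (s^2-4*t))/2 : ℝ) : Quaternion ℝ), ?_⟩
      rw [hb, hc]
      have hsq := Real.sq_sqrt hdisc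
      set y : ℝ := (-s + Real.sqrt (s^2-4*t))/2 with hy
      have hy0 : y*y + s*y + t = 0 := by
        rw [hy]; linear_combination hsq/4
      have h6 : ((y*y + s*y + t : ℝ) : Quaternion ℝ) = 0 := by rw [hy0]; exact Quaternion.coe_zero
      push_cast at h6
      convert h6 using 2
    · push_neg at hdisc
      have hpos : 0 ≤ t - s^2/4 := by linarith
      have hsq := Real.sq_sqrt hpos
      refine ⟨⟨-s/2, Real.sqrt (t - s^2/4), 0, 0⟩, ?_⟩
      rw [hb, hc]
      have key : ∀ q : Quaternion ℝ, q.re = -s/2 → q.imI = Real.sqrt (t - s^2/4) → q.imJ = 0 →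
          q.imK = 0 → q*q + ((s:ℝ):Quaternion ℝ) * q + ((t:ℝ):Quaternion ℝ) = 0 := by
        intro q h1 h2 h3 h4
        ext <;>
          simp [Quaternion.re_mul, Quaternion.imI_mul, Quaternion.imJ_mul, Quaternion.imK_mul,
            h1, h2, h3, h4] <;>
          linarith [hsq]
      exact key _ rfl rfl rfl rfl
  · have hnd : normSq d ≠ 0 := fun h => hd0 (Quaternion.normSq_eq_zero.mp h)
    set v : Quaternion ℝ := -((normSq d)⁻¹ • (star d * e)) with hv
    have hdv : d * v = -e := by
      rw [hv, mul_neg, mul_smul_comm, ← mul_assoc, Quaternion.self_mul_star,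
        Quaternion.coe_mul_eq_smul, smul_smul, inv_mul_cancel₀ hnd, one_smul]
    have hsde : (star d * e).re = s * normSq d / 2 := by linarith [factA]
    have hvre : v.re = -(s/2) := by
      rw [hv]
      simp only [Quaternion.re_neg, Quaternion.re_smul, smul_eq_mul, hsde]
      field_simp
    have hvns : normSq v = t := by
      have : v = ((-(normSq d)⁻¹ : ℝ) : Quaternion ℝ) * (star d * e) := by
        rw [Quaternion.coe_mul_eq_smul, hv, neg_smul]
      rw [this, map_mul, map_mul, Quaternion.normSq_coe, Quaternion.normSq_star]
      rw [factB]
      field_simp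
    refine ⟨v, ?_⟩
    have hb' : b = d + ((s : ℝ) : Quaternion ℝ) := by rw [hd]; abel
    have hc' : c = e + ((t : ℝ) : Quaternion ℝ) := by rw [he]; abel
    have hs' : ((s : ℝ) : Quaternion ℝ) = -(((2*v.re : ℝ)) : Quaternion ℝ) := by
      have h7 : (2*v.re : ℝ) = -s := by rw [hvre]; ring
      rw [h7, Quaternion.coe_neg, neg_neg]
    have ht' : ((t : ℝ) : Quaternion ℝ) = (((normSq v : ℝ)) : Quaternion ℝ) := by
      rw [hvns]
    have split : v*v + b*v + c
        = (v*v - ((2*v.re : ℝ) : Quaternion ℝ)*v + ((normSq v : ℝ) : Quaternion ℝ)) + (d*v + e) := by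
      rw [hb', hc', hs', ht']
      noncomm_ring
    rw [split, quatChar, hdv]
    simp

theorem critical_points_of_quadratic_mem_convexHull_roots_of_companion
    (f : Polynomial (Quaternion ℝ)) (hdeg : f.natDegree = 2)
    (r : Quaternion ℝ) (hr : Polynomial.eval r (derivative f) = 0) :
    r ∈ convexHull ℝ {s : Quaternion ℝ | Polynomial.eval s (companion f) = 0} := by
  have hf0 : f ≠ 0 := fun h => by simp [h] at hdeg
  set a : Quaternion ℝ := f.coeff 2 with ha_def
  have ha : a ≠ 0 := by
    have h := Polynomial.leadingCoeff_ne_zero.mpr hf0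
    rwa [Polynomial.leadingCoeff, hdeg] at h
  set b : Quaternion ℝ := a⁻¹ * f.coeff 1 with hb_def
  set c : Quaternion ℝ := a⁻¹ * f.coeff 0 with hc_def
  have h1 : f.coeff 1 = a * b := (mul_inv_cancel_left₀ ha _).symm
  have h0 : f.coeff 0 = a * c := (mul_inv_cancel_left₀ ha _).symm
  obtain ⟨v, hv⟩ := exists_root_quadratic b c
  set u : Quaternion ℝ := -b - v with hu_def
  have hbuv : b = -(u + v) := by rw [hu_def]; abel
  have h8 : v*v + b*v = -c := add_eq_zero_iff_eq_neg.mp hv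
  have hcuv : u * v = c := by
    calc u * v = -(v*v + b*v) := by rw [hu_def]; noncomm_ring
      _ = -(-c) := by rw [h8]
      _ = c := neg_neg c
  -- compute r from derivative root
  have hd1 : (derivative f).natDegree < 2 := by
    have := Polynomial.natDegree_derivative_le f
    omega
  rw [Polynomial.eval_eq_sum_range' hd1] at hr
  simp only [Finset.sum_range_succ, Finset.sum_range_zero, zero_add, pow_zero, mul_one,
    Polynomial.coeff_derivative, pow_one] at hr
  norm_num at hr
  -- hr : f.coeff 1 + f.coeff 2 * 2 * r = 0
  have h9 : a * (b + 2*r) = 0 := by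
    have e1 : a * (b + 2*r) = a*b + a * 2 * r := by noncomm_ring
    rw [e1, ← h1]
    rw [← ha_def] at hr
    exact hr
  have hb2r : b + 2*r = 0 := (mul_eq_zero.mp h9).resolve_left ha
  have h2r : (2:ℝ) • r = u + v := by
    have e2 : ((2:ℝ) : Quaternion ℝ) * r = (2:ℝ) • r := Quaternion.coe_mul_eq_smul 2 r
    have e3 : ((2:ℝ) : Quaternion ℝ) = (2 : Quaternion ℝ) := by norm_cast
    have e4 : (2 : Quaternion ℝ) * r = -b := by
      have := hb2r
      linear_combination (norm := abel) this
    rw [← e2, e3, e4, hbuv, neg_neg]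
  have hruv : r = ((1:ℝ)/2) • u + ((1:ℝ)/2) • v := by
    have e5 : ((1:ℝ)/2) • ((2:ℝ) • r) = ((1:ℝ)/2) • (u + v) := by rw [h2r]
    rw [smul_smul] at e5
    norm_num at e5
    exact e5
  -- evaluation of f
  have hfd3 : f.natDegree < 3 := by omega
  have evalf : ∀ x : Quaternion ℝ, eval x f = f.coeff 0 + f.coeff 1 * x + f.coeff 2 * x^2 := by
    intro x
    rw [Polynomial.eval_eq_sum_range' hfd3]
    simp [Finset.sum_range_succ]
  have hvf : eval v f = 0 := by
    rw [evalf v, h0, h1]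
    have e6 : a*c + a*b*v + f.coeff 2 * v^2 = a*(v*v + b*v + c) := by
      rw [← ha_def]; noncomm_ring
    rw [e6, hv, mul_zero]
  set w : Quaternion ℝ := u*v - v*u with hw_def
  have huf : eval u f = a * w := by
    rw [evalf u, h0, h1, ← ha_def, hcuv.symm, hbuv, hw_def]
    noncomm_ring
  -- polyConj explicit
  have hpc : polyConj f = C (star (f.coeff 0)) + C (star (f.coeff 1)) * X
      + C (star (f.coeff 2)) * X^2 := by
    rw [polyConj, Polynomial.sum_over_range _ (fun n => by simp), hdeg]
    simp [Finset.sum_range_succ]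
  have hcomp : ∀ x : Quaternion ℝ, eval x (companion f)
      = star (f.coeff 0) * eval x f + star (f.coeff 1) * (eval x f * x)
        + star (f.coeff 2) * (eval x f * x^2) := by
    intro x
    show eval x (polyConj f * f) = _
    rw [hpc, add_mul, add_mul]
    rw [mul_assoc (C (star (f.coeff 1))) X f, Polynomial.X_mul]
    rw [mul_assoc (C (star (f.coeff 2))) (X^2) f, Polynomial.X_pow_mul]
    rw [eval_add, eval_add, Polynomial.eval_C_mul, Polynomial.eval_C_mul,
      Polynomial.eval_C_mul, Polynomial.eval_mul_X, Polynomial.eval_mul_X_pow]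
  have hvS : eval v (companion f) = 0 := by
    rw [hcomp v, hvf]
    simp
  have huS : eval u (companion f) = 0 := by
    rw [hcomp u, huf, h0, h1, ← ha_def, hcuv.symm, hbuv]
    have hT1 : star (a * (u*v)) * (a * w) = normSq a • (star (u*v) * w) := by
      rw [star_mul, mul_assoc, ← mul_assoc (star a) a w, Quaternion.star_mul_self,
        Quaternion.coe_mul_eq_smul, mul_smul_comm]
    have hT2 : star (a * -(u+v)) * (a * w * u) = normSq a • (-(star u + star v) * (w * u)) := by
      rw [star_mul, mul_assoc a w u, mul_assoc, ← mul_assoc (star a) a (w*u),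
        Quaternion.star_mul_self, Quaternion.coe_mul_eq_smul, mul_smul_comm]
      congr 1
      rw [star_neg, star_add]
    have hT3 : star a * (a * w * u^2) = normSq a • (w * (u*u)) := by
      rw [pow_two, mul_assoc a w (u*u), ← mul_assoc (star a) a (w*(u*u)),
        Quaternion.star_mul_self, Quaternion.coe_mul_eq_smul]
    rw [hT1, hT2, hT3, ← smul_add, ← smul_add]
    rw [hw_def]
    rw [quatI1, smul_zero]
  -- finish via convexity
  have hsub : {u, v} ⊆ {s : Quaternion ℝ | Polynomial.eval s (companion f) = 0} := by
    intro x hx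
    rcases hx with hx | hx
    · simpa [hx] using huS
    · simp only [Set.mem_singleton_iff] at hx
      simpa [hx] using hvS
  have hmem : r ∈ convexHull ℝ ({u, v} : Set (Quaternion ℝ)) := by
    rw [convexHull_pair]
    exact ⟨(1:ℝ)/2, (1:ℝ)/2, by norm_num, by norm_num, by norm_num, hruv.symm⟩
  exact convexHull_mono hsub hmem
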